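/- Let D ⊆ ℝ^n be a measurable set with Lebesgue measure, let (φ_l)_{l≥1} be an orthonormal sequence in L²(D), and let (λ_l)_{l≥1} be a nonincreasing sequence of nonnegative reals with Σ_l λ_l² < ∞. Suppose k ∈ L²(D × D) satisfies k = Σ_{l=1}^∞ λ_l φ_l ⊗ φ_l, with convergence of the series in L²(D × D) (where (φ_l ⊗ φ_l)(y,x) = φ_l(y)φ_l(x)). Then for every integer r > 0 and every choice of functions f_1, …, f_r ∈ L²(D): ∫_D ∫_D ( k(y,x) − Σ_{l=1}^r f_l(y) f_l(x) )² dy dx ≥ Σ_{l=r+1}^∞ λ_l², and equality holds for the choice f_l = √λ_l φ_l, l = 1, …, r. -/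

import Mathlib

open MeasureTheory
open scoped BigOperators
open scoped RealInnerProductSpace

section Abstract

variable {E : Type*} [NormedAddCommGroup E] [InnerProductSpace ℝ E]
variable {H : Type*} [NormedAddCommGroup H] [InnerProductSpace ℝ H]

private lemma pyth {U : ℕ → E} (hU : Orthonormal ℝ U) (c : ℕ → ℝ) (s : Finset ℕ) :
    ‖∑ l ∈ s, c l • U l‖ ^ 2 = ∑ l ∈ s, c l ^ 2 := by
  calc ‖∑ l ∈ s, c l • U l‖ ^ 2
      = ⟪∑ l ∈ s, c l • U l, ∑ l ∈ s, c l • U l⟫ := (real_inner_self_eq_norm_sq _).symm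
    _ = ∑ l ∈ s, (starRingEnd ℝ) (c l) * c l := hU.inner_sum c c s
    _ = ∑ l ∈ s, c l ^ 2 := by simp [sq]

private lemma abstract_eq (U : ℕ → E) (hU : Orthonormal ℝ U) (lam : ℕ → ℝ)
    (hsum : Summable fun l => lam l ^ 2) {K : E}
    (hK : Filter.Tendsto (fun m => ‖K - ∑ l ∈ Finset.range m, lam l • U l‖)
      Filter.atTop (nhds 0)) (r : ℕ) :
    ‖K - ∑ l ∈ Finset.range r, lam l • U l‖ ^ 2 = ∑' l : ℕ, lam (r + l) ^ 2 := by
  set S : ℕ → E := fun m => ∑ l ∈ Finset.range m, lam l • U l with hS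
  have hSK : Filter.Tendsto S Filter.atTop (nhds K) := by
    rw [tendsto_iff_norm_sub_tendsto_zero]
    simpa [norm_sub_rev] using hK
  have h1 : Filter.Tendsto (fun m => ‖S m - S r‖ ^ 2) Filter.atTop (nhds (‖K - S r‖ ^ 2)) := by
    exact ((hSK.sub tendsto_const_nhds).norm).pow 2
  have htail : Summable fun l : ℕ => lam (r + l) ^ 2 := by
    have := (summable_nat_add_iff (f := fun l => lam l ^ 2) r).mpr hsum
    simpa [add_comm] using this
  have h2 : Filter.Tendsto (fun m => ‖S m - S r‖ ^ 2) Filter.atTop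
      (nhds (∑' l : ℕ, lam (r + l) ^ 2)) := by
    have hev : (fun m => ∑ j ∈ Finset.range (m - r), lam (r + j) ^ 2) =ᶠ[Filter.atTop]
        fun m => ‖S m - S r‖ ^ 2 := by
      filter_upwards [Filter.eventually_ge_atTop r] with m hm
      have hsub : S m - S r = ∑ l ∈ Finset.Ico r m, lam l • U l := by
        rw [hS]
        rw [Finset.sum_Ico_eq_sub _ hm]
      rw [hsub, pyth hU, Finset.sum_Ico_eq_sum_range]
    have hbase : Filter.Tendsto (fun m => ∑ j ∈ Finset.range (m - r), lam (r + j) ^ 2)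
        Filter.atTop (nhds (∑' l : ℕ, lam (r + l) ^ 2)) :=
      (htail.hasSum.tendsto_sum_nat).comp (Filter.tendsto_sub_atTop_nat r)
    exact hbase.congr' hev
  exact tendsto_nhds_unique h1 h2

private lemma abstract_ineq (t : H → H → E)
    (ht : ∀ a b c d : H, ⟪t a b, t c d⟫ = ⟪a, c⟫ * ⟪b, d⟫)
    (φ : ℕ → H) (hφ : Orthonormal ℝ φ) (lam : ℕ → ℝ) (hpos : ∀ l, 0 ≤ lam l)
    (hmono : ∀ ⦃l l'⦄, l ≤ l' → lam l' ≤ lam l) (hsum : Summable fun l => lam l ^ 2)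
    {K : E}
    (hK : Filter.Tendsto (fun m => ‖K - ∑ l ∈ Finset.range m, lam l • t (φ l) (φ l)‖)
      Filter.atTop (nhds 0))
    (r : ℕ) (f : Fin r → H) :
    (∑' l : ℕ, lam (r + l) ^ 2) ≤ ‖K - ∑ m : Fin r, t (f m) (f m)‖ ^ 2 := by
  classical
  set V := Submodule.span ℝ (Set.range f) with hV
  haveI : FiniteDimensional ℝ V := FiniteDimensional.span_of_finite ℝ (Set.finite_range f)
  set s := Module.finrank ℝ V with hs
  have hsr : s ≤ r := by
    have := finrank_range_le_card (R := ℝ) f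
    simpa [Set.finrank, ← hV, ← hs] using this
  set b := stdOrthonormalBasis ℝ V with hb
  set ψ : Fin s → H := fun a => ((b a : V) : H) with hψdef
  have hψ : Orthonormal ℝ ψ := by
    rw [orthonormal_iff_ite]
    intro a a'
    have := orthonormal_iff_ite.mp b.orthonormal a a'
    rw [hψdef]
    simpa [Submodule.coe_inner] using this
  have hfV : ∀ m, f m ∈ V := fun m => Submodule.subset_span ⟨m, rfl⟩
  have hspan : ∀ m, f m ∈ Submodule.span ℝ (Set.range ψ) := by
    intro m
    have hrange : Set.range ψ = (V.subtype) '' Set.range (fun a => b a) := by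
      rw [← Set.range_comp]; rfl
    have : Submodule.span ℝ (Set.range ψ) = V := by
      rw [hrange, Submodule.span_image]
      have hbspan : Submodule.span ℝ (Set.range fun a => b a) = (⊤ : Submodule ℝ V) := by
        simpa using b.toBasis.span_eq
      rw [hbspan, Submodule.map_top, Submodule.range_subtype]
    rw [this]; exact hfV m
  set d : ℕ → ℝ := fun l => ∑ a, ⟪ψ a, φ l⟫ ^ 2 with hd
  set ξ : ℕ → H := fun l => φ l - ∑ a, ⟪ψ a, φ l⟫ • ψ a with hξ
  have hd0 : ∀ l, 0 ≤ d l := fun l => Finset.sum_nonneg fun _ _ => sq_nonneg _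
  have hψξ : ∀ a l, ⟪ψ a, ξ l⟫ = 0 := by
    intro a l
    rw [hξ]
    simp only [inner_sub_right]
    rw [hψ.inner_right_fintype (fun a => ⟪ψ a, φ l⟫) a]
    ring
  have hφξ : ∀ l, ⟪φ l, ξ l⟫ = 1 - d l := by
    intro l
    rw [hξ]
    simp only [inner_sub_right, inner_sum, real_inner_smul_right]
    have h1 : ⟪φ l, φ l⟫ = 1 := by
      rw [real_inner_self_eq_norm_sq, hφ.1 l]; norm_num
    rw [h1, hd]
    congr 1
    apply Finset.sum_congr rfl
    intro a _
    rw [sq, real_inner_comm (φ l) (ψ a)]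
  have hnξ : ∀ l, ⟪ξ l, ξ l⟫ = 1 - d l := by
    intro l
    nth_rewrite 1 [hξ]
    simp only [inner_sub_left, sum_inner, real_inner_smul_left]
    rw [hφξ l]
    have : ∀ a ∈ Finset.univ (α := Fin s), ⟪ψ a, φ l⟫ * ⟪ψ a, ξ l⟫ = 0 := by
      intro a _; rw [hψξ a l]; ring
    rw [Finset.sum_congr rfl this]
    simp
  have hd1 : ∀ l, d l ≤ 1 := by
    intro l
    have := real_inner_self_nonneg (x := ξ l)
    rw [hnξ l] at this; linarith
  have hfξ : ∀ m l, ⟪f m, ξ l⟫ = 0 := by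
    intro m l
    obtain ⟨c, hc⟩ := (Submodule.mem_span_range_iff_exists_fun ℝ).mp (hspan m)
    rw [← hc, sum_inner]
    simp [real_inner_smul_left, hψξ]
  have hdfin : ∀ u : Finset ℕ, ∑ l ∈ u, d l ≤ (r : ℝ) := by
    intro u
    calc ∑ l ∈ u, d l = ∑ a : Fin s, ∑ l ∈ u, ⟪ψ a, φ l⟫ ^ 2 := Finset.sum_comm
      _ ≤ ∑ _a : Fin s, (1 : ℝ) := by
          apply Finset.sum_le_sum
          intro a _
          have hB := hφ.sum_inner_products_le (𝕜 := ℝ) (ψ a) (s := u)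
          have hn : ‖ψ a‖ = 1 := hψ.1 a
          calc ∑ l ∈ u, ⟪ψ a, φ l⟫ ^ 2 = ∑ l ∈ u, ‖⟪φ l, ψ a⟫‖ ^ 2 := by
                apply Finset.sum_congr rfl
                intro l _
                rw [real_inner_comm, Real.norm_eq_abs, sq_abs]
            _ ≤ ‖ψ a‖ ^ 2 := hB
            _ = 1 := by rw [hn]; norm_num
      _ = (s : ℝ) := by simp
      _ ≤ (r : ℝ) := by exact_mod_cast hsr
  set G : E := ∑ m : Fin r, t (f m) (f m) with hG
  set T : E := K - G with hT
  have hSK : Filter.Tendsto (fun m => ∑ l ∈ Finset.range m, lam l • t (φ l) (φ l))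
      Filter.atTop (nhds K) := by
    rw [tendsto_iff_norm_sub_tendsto_zero]
    simpa [norm_sub_rev] using hK
  have hKinner : ∀ l, ⟪t (ξ l) (φ l), K⟫ = lam l * (1 - d l) := by
    intro l
    have h1 : Filter.Tendsto
        (fun m => ⟪t (ξ l) (φ l), ∑ l' ∈ Finset.range m, lam l' • t (φ l') (φ l')⟫)
        Filter.atTop (nhds ⟪t (ξ l) (φ l), K⟫) :=
      (tendsto_const_nhds.inner hSK)
    have h2 : ∀ m, l + 1 ≤ m →
        ⟪t (ξ l) (φ l), ∑ l' ∈ Finset.range m, lam l' • t (φ l') (φ l')⟫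
          = lam l * (1 - d l) := by
      intro m hm
      rw [inner_sum]
      have hterm : ∀ l' ∈ Finset.range m, l' ≠ l →
          ⟪t (ξ l) (φ l), lam l' • t (φ l') (φ l')⟫ = 0 := by
        intro l' _ hne
        rw [real_inner_smul_right, ht]
        have : ⟪φ l, φ l'⟫ = 0 := hφ.2 (Ne.symm hne)
        rw [this]; ring
      rw [Finset.sum_eq_single l hterm (fun h => absurd (Finset.mem_range.mpr hm) h)]
      rw [real_inner_smul_right, ht]
      have h3 : ⟪φ l, φ l⟫ = 1 := by
        rw [real_inner_self_eq_norm_sq, hφ.1 l]; norm_num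
      rw [h3, real_inner_comm (φ l) (ξ l), hφξ l]; ring
    have hev : (fun m => ⟪t (ξ l) (φ l), ∑ l' ∈ Finset.range m, lam l' • t (φ l') (φ l')⟫)
        =ᶠ[Filter.atTop] fun _ => lam l * (1 - d l) :=
      Filter.eventually_atTop.mpr ⟨l + 1, h2⟩
    have := h1.congr' hev
    exact (tendsto_nhds_unique this tendsto_const_nhds)
  have hGinner : ∀ l, ⟪t (ξ l) (φ l), G⟫ = 0 := by
    intro l
    rw [hG, inner_sum]
    apply Finset.sum_eq_zero
    intro m _
    rw [ht]
    have : ⟪ξ l, f m⟫ = 0 := by rw [real_inner_comm]; exact hfξ m l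
    rw [this]; ring
  have hTinner : ∀ l, ⟪t (ξ l) (φ l), T⟫ = lam l * (1 - d l) := by
    intro l
    rw [hT, inner_sub_right, hKinner l, hGinner l, sub_zero]
  have hbessel : ∀ u : Finset ℕ, ∑ l ∈ u, lam l ^ 2 * (1 - d l) ≤ ‖T‖ ^ 2 := by
    intro u
    set v : {l : ℕ // ξ l ≠ 0} → E := fun j => (‖ξ (j : ℕ)‖)⁻¹ • t (ξ (j : ℕ)) (φ (j : ℕ))
      with hv
    have hvon : Orthonormal ℝ v := by
      rw [orthonormal_iff_ite]
      intro i j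
      rw [hv]
      simp only [real_inner_smul_left, real_inner_smul_right, ht]
      by_cases hij : i = j
      · subst hij
        have h1 : ⟪φ (i : ℕ), φ (i : ℕ)⟫ = 1 := by
          rw [real_inner_self_eq_norm_sq, hφ.1]; norm_num
        have h2 : ⟪ξ (i : ℕ), ξ (i : ℕ)⟫ = ‖ξ (i : ℕ)‖ ^ 2 := real_inner_self_eq_norm_sq _
        have h3 : ‖ξ (i : ℕ)‖ ≠ 0 := norm_ne_zero_iff.mpr i.2
        rw [h1, h2]
        simp only [if_pos rfl]
        field_simp
        simp
      · have hne : (i : ℕ) ≠ (j : ℕ) := fun h => hij (Subtype.ext h)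
        have : ⟪φ (i : ℕ), φ (j : ℕ)⟫ = 0 := hφ.2 hne
        rw [this]
        simp [if_neg hij]
    have key : ∀ j : {l : ℕ // ξ l ≠ 0}, ⟪v j, T⟫ ^ 2 = lam (j : ℕ) ^ 2 * (1 - d (j : ℕ)) := by
      intro j
      rw [hv]
      simp only [real_inner_smul_left]
      rw [hTinner]
      have h1 : 1 - d (j : ℕ) = ‖ξ (j : ℕ)‖ ^ 2 := by
        rw [← hnξ, real_inner_self_eq_norm_sq]
      have h3 : ‖ξ (j : ℕ)‖ ≠ 0 := norm_ne_zero_iff.mpr j.2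
      rw [h1]
      field_simp
    have hfilter : ∑ l ∈ u, lam l ^ 2 * (1 - d l)
        = ∑ l ∈ u.filter (fun l => ξ l ≠ 0), lam l ^ 2 * (1 - d l) := by
      symm
      apply Finset.sum_filter_of_ne
      intro l _ h0
      intro hz
      apply h0
      have : (1 : ℝ) - d l = 0 := by
        rw [← hnξ l, hz, inner_zero_left]
      rw [this, mul_zero]
    have hsubtype : ∑ l ∈ u.filter (fun l => ξ l ≠ 0), lam l ^ 2 * (1 - d l)
        = ∑ j ∈ u.subtype (fun l => ξ l ≠ 0), lam (j : ℕ) ^ 2 * (1 - d (j : ℕ)) := by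
      exact (Finset.sum_subtype_eq_sum_filter
        (fun l => lam l ^ 2 * (1 - d l)) (p := fun l => ξ l ≠ 0)).symm
    rw [hfilter, hsubtype]
    calc ∑ j ∈ u.subtype (fun l => ξ l ≠ 0), lam (j : ℕ) ^ 2 * (1 - d (j : ℕ))
        = ∑ j ∈ u.subtype (fun l => ξ l ≠ 0), ‖⟪v j, T⟫‖ ^ 2 := by
          apply Finset.sum_congr rfl
          intro j _
          rw [Real.norm_eq_abs, sq_abs, key j]
      _ ≤ ‖T‖ ^ 2 := hvon.sum_inner_products_le T
  have hnn : ∀ l, 0 ≤ lam l ^ 2 * (1 - d l) :=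
    fun l => mul_nonneg (sq_nonneg _) (by linarith [hd1 l])
  have hsumA : Summable fun l => lam l ^ 2 * (1 - d l) :=
    summable_of_sum_le hnn hbessel
  have hA : ∑' l, lam l ^ 2 * (1 - d l) ≤ ‖T‖ ^ 2 := Summable.tsum_le_of_sum_le hsumA hbessel
  have hsumd : Summable d := summable_of_sum_le hd0 hdfin
  have htail : Summable fun j : ℕ => lam (r + j) ^ 2 := by
    have := (summable_nat_add_iff (f := fun l => lam l ^ 2) r).mpr hsum
    simpa [add_comm] using this
  have hdtail : Summable fun j : ℕ => d (r + j) := by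
    have := (summable_nat_add_iff (f := d) r).mpr hsumd
    simpa [add_comm] using this
  have hsum1 : Summable fun j : ℕ => lam (r + j) ^ 2 * (1 - d (r + j)) := by
    have := (summable_nat_add_iff (f := fun l => lam l ^ 2 * (1 - d l)) r).mpr hsumA
    simpa [add_comm] using this
  have hsum2 : Summable fun j : ℕ => lam (r + j) ^ 2 * d (r + j) := by
    apply Summable.of_nonneg_of_le (fun j => mul_nonneg (sq_nonneg _) (hd0 _))
      (fun j => ?_) htail
    exact mul_le_of_le_one_right (sq_nonneg _) (hd1 _)
  suffices h : ∑' l : ℕ, lam (r + l) ^ 2 ≤ ∑' l, lam l ^ 2 * (1 - d l) by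
    calc ∑' l : ℕ, lam (r + l) ^ 2 ≤ ∑' l, lam l ^ 2 * (1 - d l) := h
      _ ≤ ‖T‖ ^ 2 := hA
  have hsplit : ∑' l, lam l ^ 2 * (1 - d l)
      = (∑ l ∈ Finset.range r, lam l ^ 2 * (1 - d l))
        + ∑' j : ℕ, lam (r + j) ^ 2 * (1 - d (r + j)) := by
    rw [← Summable.sum_add_tsum_nat_add r hsumA]
    congr 1
    apply tsum_congr
    intro j
    rw [add_comm j r]
  have hsplit2 : ∑' l : ℕ, lam (r + l) ^ 2
      = (∑' j : ℕ, lam (r + j) ^ 2 * (1 - d (r + j)))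
        + ∑' j : ℕ, lam (r + j) ^ 2 * d (r + j) := by
    rw [← Summable.tsum_add hsum1 hsum2]
    apply tsum_congr
    intro j
    ring
  have hkey : ∑' j : ℕ, lam (r + j) ^ 2 * d (r + j)
      ≤ ∑ l ∈ Finset.range r, lam l ^ 2 * (1 - d l) := by
    have step1 : ∑' j : ℕ, lam (r + j) ^ 2 * d (r + j) ≤ lam r ^ 2 * ∑' j : ℕ, d (r + j) := by
      rw [← hdtail.tsum_mul_left (lam r ^ 2)]
      apply Summable.tsum_le_tsum _ hsum2 (hdtail.mul_left _)
      intro j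
      exact mul_le_mul_of_nonneg_right
        (pow_le_pow_left₀ (hpos _) (hmono (Nat.le_add_right r j)) 2) (hd0 _)
    have step2 : ∑' j : ℕ, d (r + j) ≤ ∑ l ∈ Finset.range r, (1 - d l) := by
      apply Summable.tsum_le_of_sum_le hdtail
      intro u
      have himg : ∑ j ∈ u, d (r + j) = ∑ l ∈ u.image (r + ·), d l := by
        rw [Finset.sum_image]
        intro x _ y _ h
        beta_reduce at h
        omega
      have hdisj : Disjoint (Finset.range r) (u.image (r + ·)) := by
        rw [Finset.disjoint_left]
        intro l hl hl'
        rw [Finset.mem_range] at hl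
        obtain ⟨j, _, rfl⟩ := Finset.mem_image.mp hl'
        omega
      have hun := hdfin (Finset.range r ∪ u.image (r + ·))
      rw [Finset.sum_union hdisj] at hun
      have : ∑ l ∈ Finset.range r, (1 - d l) = (r : ℝ) - ∑ l ∈ Finset.range r, d l := by
        rw [Finset.sum_sub_distrib, Finset.sum_const, Finset.card_range]
        simp
      rw [this, himg]
      linarith
    have step3 : lam r ^ 2 * ∑ l ∈ Finset.range r, (1 - d l)
        ≤ ∑ l ∈ Finset.range r, lam l ^ 2 * (1 - d l) := by
      rw [Finset.mul_sum]
      apply Finset.sum_le_sum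
      intro l hl
      have h1 : lam r ≤ lam l := hmono (le_of_lt (Finset.mem_range.mp hl))
      have h2 : (0 : ℝ) ≤ 1 - d l := by linarith [hd1 l]
      exact mul_le_mul_of_nonneg_right (pow_le_pow_left₀ (hpos r) h1 2) h2
    calc ∑' j : ℕ, lam (r + j) ^ 2 * d (r + j)
        ≤ lam r ^ 2 * ∑' j : ℕ, d (r + j) := step1
      _ ≤ lam r ^ 2 * ∑ l ∈ Finset.range r, (1 - d l) :=
          mul_le_mul_of_nonneg_left step2 (sq_nonneg _)
      _ ≤ ∑ l ∈ Finset.range r, lam l ^ 2 * (1 - d l) := step3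
  rw [hsplit2, hsplit]
  linarith

end Abstract

section Glue

variable {α β : Type*} [MeasurableSpace α] [MeasurableSpace β]

private lemma norm_sq_eq_integral {ν : Measure α} (X : Lp ℝ 2 ν) {h : α → ℝ}
    (hh : h =ᵐ[ν] X) : ∫ a, (h a) ^ 2 ∂ν = ‖X‖ ^ 2 := by
  have h1 : ⟪X, X⟫ = ∫ a, (X : α → ℝ) a * (X : α → ℝ) a ∂ν := by
    rw [L2.inner_def]
    apply integral_congr_ae
    filter_upwards with a
    simp [RCLike.inner_apply, sq]
  rw [← real_inner_self_eq_norm_sq, h1]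
  apply integral_congr_ae
  filter_upwards [hh] with a ha
  rw [ha, sq]

private lemma memLp_prod_mul {μ : Measure α} {ν : Measure β} [SFinite μ] [SFinite ν]
    {F : α → ℝ} {G : β → ℝ} (hF : MemLp F 2 μ) (hG : MemLp G 2 ν) :
    MemLp (fun p : α × β => F p.1 * G p.2) 2 (μ.prod ν) := by
  have hm : AEStronglyMeasurable (fun p : α × β => F p.1 * G p.2) (μ.prod ν) :=
    hF.aestronglyMeasurable.comp_fst.mul hG.aestronglyMeasurable.comp_snd
  rw [memLp_two_iff_integrable_sq hm]
  have heq : (fun p : α × β => (F p.1 * G p.2) ^ 2)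
      = fun p : α × β => (fun x => F x ^ 2) p.1 * (fun y => G y ^ 2) p.2 := by
    funext p; ring
  rw [heq]
  exact (hF.integrable_sq).mul_prod (hG.integrable_sq)

private lemma ae_fst {μ : Measure α} {ν : Measure β} [SFinite μ] [SFinite ν] {f g : α → ℝ}
    (h : f =ᵐ[μ] g) : (fun p : α × β => f p.1) =ᵐ[μ.prod ν] fun p => g p.1 :=
  MeasureTheory.Measure.quasiMeasurePreserving_fst.ae_eq_comp h

private lemma ae_snd {μ : Measure α} {ν : Measure β} [SFinite μ] [SFinite ν] {f g : β → ℝ}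
    (h : f =ᵐ[ν] g) : (fun p : α × β => f p.2) =ᵐ[μ.prod ν] fun p => g p.2 :=
  MeasureTheory.Measure.quasiMeasurePreserving_snd.ae_eq_comp h

private lemma Lp_coeFn_sum {ν : Measure α} {ι : Type*} (s : Finset ι) (X : ι → Lp ℝ 2 ν) :
    ⇑(∑ i ∈ s, X i) =ᵐ[ν] fun a => ∑ i ∈ s, X i a := by
  classical
  induction s using Finset.induction with
  | empty => simp only [Finset.sum_empty]; exact Lp.coeFn_zero (E := ℝ) (p := 2) (μ := ν)
  | @insert i s hi ih =>
    rw [Finset.sum_insert hi]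
    filter_upwards [Lp.coeFn_add (X i) (∑ j ∈ s, X j), ih] with a h1 h2
    rw [h1]
    simp only [Pi.add_apply]
    rw [h2, Finset.sum_insert hi]

end Glue

/-- Optimal-truncation result (Hsing & Eubank, Thms 4.4.7 and 4.6.8): if
`k ∈ L²(D×D)` has the expansion `k(y,x) = Σ_l λ_l φ_l(y) φ_l(x)` (convergence in
`L²(D×D)`), with `(φ_l)` orthonormal in `L²(D)` and `(λ_l)` nonincreasing,
nonnegative and square-summable, then for every `r > 0` and every choice of
`f_1, …, f_r ∈ L²(D)` one has
`∫∫ (k(y,x) − Σ_{l≤r} f_l(y) f_l(x))² ≥ Σ_{l>r} λ_l²`,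
with equality for `f_l = √λ_l φ_l`.  (Indices are 0-based, so the tail sum
`Σ_{l>r} λ_l²` of the 1-based statement is `Σ'_{l:ℕ} λ_{r+l}²`.) -/
theorem stmt_9 (n : ℕ) (D : Set (EuclideanSpace ℝ (Fin n))) (hD : MeasurableSet D)
    (φ : ℕ → EuclideanSpace ℝ (Fin n) → ℝ)
    (hφmem : ∀ l, MemLp (φ l) 2 (volume.restrict D))
    (hortho : ∀ l l', ∫ x, φ l x * φ l' x ∂(volume.restrict D) =
      if l = l' then 1 else 0)
    (lam : ℕ → ℝ) (hpos : ∀ l, 0 ≤ lam l) (hmono : ∀ ⦃l l'⦄, l ≤ l' → lam l' ≤ lam l)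
    (hsummable : Summable fun l => (lam l) ^ 2)
    (k : EuclideanSpace ℝ (Fin n) → EuclideanSpace ℝ (Fin n) → ℝ)
    (hkmem : MemLp (fun p : EuclideanSpace ℝ (Fin n) × EuclideanSpace ℝ (Fin n) =>
      k p.1 p.2) 2 ((volume.restrict D).prod (volume.restrict D)))
    (hconv : Filter.Tendsto
      (fun m => ∫ p, (k p.1 p.2 - ∑ l ∈ Finset.range m, lam l * φ l p.1 * φ l p.2) ^ 2
        ∂((volume.restrict D).prod (volume.restrict D)))
      Filter.atTop (nhds 0))
    (r : ℕ) (hr : 0 < r) :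
    (∀ f : Fin r → EuclideanSpace ℝ (Fin n) → ℝ,
      (∀ l, MemLp (f l) 2 (volume.restrict D)) →
      (∑' l : ℕ, (lam (r + l)) ^ 2) ≤
        ∫ p, (k p.1 p.2 - ∑ l, f l p.1 * f l p.2) ^ 2
          ∂((volume.restrict D).prod (volume.restrict D))) ∧
    (∫ p, (k p.1 p.2 -
        ∑ l : Fin r, (Real.sqrt (lam l) * φ l p.1) * (Real.sqrt (lam l) * φ l p.2)) ^ 2
        ∂((volume.restrict D).prod (volume.restrict D))) =
      ∑' l : ℕ, (lam (r + l)) ^ 2 := by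
  set μ : Measure (EuclideanSpace ℝ (Fin n)) := volume.restrict D with hμ
  set μ2 := μ.prod μ with hμ2
  set Φ : ℕ → Lp ℝ 2 μ := fun l => (hφmem l).toLp (φ l) with hΦdef
  have hΦcoe : ∀ l, ⇑(Φ l) =ᵐ[μ] φ l := fun l => (hφmem l).coeFn_toLp
  have hΦinner : ∀ a b, ⟪Φ a, Φ b⟫ = if a = b then (1 : ℝ) else 0 := by
    intro a b
    rw [← hortho a b, L2.inner_def]
    apply integral_congr_ae
    filter_upwards [hΦcoe a, hΦcoe b] with x hx hy
    simp [RCLike.inner_apply, hx, hy, mul_comm]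
  have hΦ : Orthonormal ℝ Φ := orthonormal_iff_ite.mpr hΦinner
  set t : Lp ℝ 2 μ → Lp ℝ 2 μ → Lp ℝ 2 μ2 := fun F G =>
    (memLp_prod_mul (Lp.memLp F) (Lp.memLp G)).toLp (fun p => F p.1 * G p.2) with htdef
  have htcoe : ∀ F G, ⇑(t F G) =ᵐ[μ2] fun p => F p.1 * G p.2 :=
    fun F G => MemLp.coeFn_toLp _
  have ht : ∀ a b c d, ⟪t a b, t c d⟫ = ⟪a, c⟫ * ⟪b, d⟫ := by
    intro a b c d
    rw [L2.inner_def, L2.inner_def, L2.inner_def]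
    simp only [RCLike.inner_apply, starRingEnd_apply, star_trivial]
    rw [← integral_prod_mul (μ := μ) (ν := μ)
      (f := fun y => (c : EuclideanSpace ℝ (Fin n) → ℝ) y * a y)
      (g := fun x => (d : EuclideanSpace ℝ (Fin n) → ℝ) x * b x)]
    apply integral_congr_ae
    filter_upwards [htcoe a b, htcoe c d] with p h1 h2
    rw [h1, h2]
    ring
  set K : Lp ℝ 2 μ2 := hkmem.toLp _ with hKdef
  have hKcoe : ⇑K =ᵐ[μ2] fun p => k p.1 p.2 := hkmem.coeFn_toLp
  have hUcoe : ∀ l, ⇑(t (Φ l) (Φ l)) =ᵐ[μ2] fun p => φ l p.1 * φ l p.2 := by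
    intro l
    filter_upwards [htcoe (Φ l) (Φ l), ae_fst (ν := μ) (hΦcoe l), ae_snd (μ := μ) (hΦcoe l)]
      with p h1 h2 h3
    rw [h1]
    rw [h2, h3]
  have hallterms : ∀ᵐ p ∂μ2, ∀ l : ℕ,
      (lam l • t (Φ l) (Φ l)) p = lam l * φ l p.1 * φ l p.2 := by
    rw [ae_all_iff]
    intro l
    filter_upwards [Lp.coeFn_smul (lam l) (t (Φ l) (Φ l)), hUcoe l] with p h1 h2
    rw [h1]
    simp only [Pi.smul_apply, smul_eq_mul]
    rw [h2]
    ring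
  have hScoe : ∀ m : ℕ, ⇑(∑ l ∈ Finset.range m, lam l • t (Φ l) (Φ l)) =ᵐ[μ2]
      fun p => ∑ l ∈ Finset.range m, lam l * φ l p.1 * φ l p.2 := by
    intro m
    filter_upwards [Lp_coeFn_sum (Finset.range m) (fun l => lam l • t (Φ l) (Φ l)), hallterms]
      with p h1 h2
    rw [h1]
    exact Finset.sum_congr rfl fun l _ => h2 l
  have hdiffcoe : ∀ m : ℕ, ⇑(K - ∑ l ∈ Finset.range m, lam l • t (Φ l) (Φ l)) =ᵐ[μ2]
      fun p => k p.1 p.2 - ∑ l ∈ Finset.range m, lam l * φ l p.1 * φ l p.2 := by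
    intro m
    filter_upwards [Lp.coeFn_sub K (∑ l ∈ Finset.range m, lam l • t (Φ l) (Φ l)), hKcoe,
      hScoe m] with p h1 h2 h3
    rw [h1]
    simp only [Pi.sub_apply]
    rw [h2, h3]
  have hnormint : ∀ m : ℕ,
      ∫ p, (k p.1 p.2 - ∑ l ∈ Finset.range m, lam l * φ l p.1 * φ l p.2) ^ 2 ∂μ2
        = ‖K - ∑ l ∈ Finset.range m, lam l • t (Φ l) (Φ l)‖ ^ 2 :=
    fun m => norm_sq_eq_integral _ (hdiffcoe m).symm
  have hKten : Filter.Tendsto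
      (fun m => ‖K - ∑ l ∈ Finset.range m, lam l • t (Φ l) (Φ l)‖)
      Filter.atTop (nhds 0) := by
    have h1 : Filter.Tendsto
        (fun m => ‖K - ∑ l ∈ Finset.range m, lam l • t (Φ l) (Φ l)‖ ^ 2)
        Filter.atTop (nhds 0) := by
      have : (fun m => ∫ p, (k p.1 p.2
          - ∑ l ∈ Finset.range m, lam l * φ l p.1 * φ l p.2) ^ 2 ∂μ2)
          = fun m => ‖K - ∑ l ∈ Finset.range m, lam l • t (Φ l) (Φ l)‖ ^ 2 :=
        funext hnormint
      rw [← this]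
      exact hconv
    have h2 : Filter.Tendsto (fun m => Real.sqrt
        (‖K - ∑ l ∈ Finset.range m, lam l • t (Φ l) (Φ l)‖ ^ 2))
        Filter.atTop (nhds (Real.sqrt 0)) := (Real.continuous_sqrt.tendsto 0).comp h1
    rw [Real.sqrt_zero] at h2
    exact h2.congr fun m => Real.sqrt_sq (norm_nonneg _)
  constructor
  · intro f hf
    set F : Fin r → Lp ℝ 2 μ := fun m => (hf m).toLp (f m) with hFdef
    have hFcoe : ∀ m, ⇑(F m) =ᵐ[μ] f m := fun m => (hf m).coeFn_toLp
    have habs := abstract_ineq t ht Φ hΦ lam hpos hmono hsummable hKten r F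
    have hGterms : ∀ᵐ p ∂μ2, ∀ m : Fin r,
        (t (F m) (F m)) p = f m p.1 * f m p.2 := by
      rw [ae_all_iff]
      intro m
      filter_upwards [htcoe (F m) (F m), ae_fst (ν := μ) (hFcoe m), ae_snd (μ := μ) (hFcoe m)]
        with p h1 h2 h3
      rw [h1]
      rw [h2, h3]
    have hGcoe : ⇑(K - ∑ m : Fin r, t (F m) (F m)) =ᵐ[μ2]
        fun p => k p.1 p.2 - ∑ m : Fin r, f m p.1 * f m p.2 := by
      filter_upwards [Lp.coeFn_sub K (∑ m : Fin r, t (F m) (F m)), hKcoe,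
        Lp_coeFn_sum Finset.univ (fun m : Fin r => t (F m) (F m)), hGterms]
        with p h1 h2 h3 h4
      rw [h1]
      simp only [Pi.sub_apply]
      rw [h2, h3]
      congr 1
      exact Finset.sum_congr rfl fun m _ => h4 m
    calc ∑' l : ℕ, lam (r + l) ^ 2 ≤ ‖K - ∑ m : Fin r, t (F m) (F m)‖ ^ 2 := habs
      _ = ∫ p, (k p.1 p.2 - ∑ m : Fin r, f m p.1 * f m p.2) ^ 2 ∂μ2 :=
          (norm_sq_eq_integral _ hGcoe.symm).symm
  · have hU : Orthonormal ℝ (fun l => t (Φ l) (Φ l)) := by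
      rw [orthonormal_iff_ite]
      intro a b
      show ⟪t (Φ a) (Φ a), t (Φ b) (Φ b)⟫ = _
      rw [ht, hΦinner]
      by_cases h : a = b <;> simp [h]
    have habs := abstract_eq (fun l => t (Φ l) (Φ l)) hU lam hsummable hKten r
    have hintrw : ∫ p, (k p.1 p.2 -
        ∑ l : Fin r, (Real.sqrt (lam l) * φ l p.1) * (Real.sqrt (lam l) * φ l p.2)) ^ 2 ∂μ2
        = ∫ p, (k p.1 p.2 - ∑ l ∈ Finset.range r, lam l * φ l p.1 * φ l p.2) ^ 2 ∂μ2 := by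
      apply integral_congr_ae
      filter_upwards with p
      congr 2
      rw [← Fin.sum_univ_eq_sum_range (fun l => lam l * φ l p.1 * φ l p.2) r]
      apply Finset.sum_congr rfl
      intro l _
      have : Real.sqrt (lam l) * Real.sqrt (lam l) = lam l := Real.mul_self_sqrt (hpos l)
      calc (Real.sqrt (lam l) * φ l p.1) * (Real.sqrt (lam l) * φ l p.2)
          = (Real.sqrt (lam l) * Real.sqrt (lam l)) * φ l p.1 * φ l p.2 := by ring
        _ = lam l * φ l p.1 * φ l p.2 := by rw [this]
    rw [hintrw, hnormint r, habs]
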